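/- Let L > 0, let f : ℝ^n → ℝ be L-smooth convex, and suppose there exists M ∈ ℝ with f*(p) ≤ M for all p ∈ dom f*. Then dom f* is a closed set; in particular its minimum-norm point p⋆ lies in dom f*. Moreover, for every x₀ ∈ ℝ^n, D_f(x₀, p⋆) ≤ M + f(x₀) + ‖x₀‖·‖∇f(x₀)‖. -/
import Mathlib


open scoped InnerProductSpace
open Filter Topology

/-- Legendre–Fenchel conjugate of `f`, valued in `ℝ ∪ {∞}` (modeled in `EReal`). -/
noncomputable def fconj {n : ℕ} (f : EuclideanSpace ℝ (Fin n) → ℝ)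
    (p : EuclideanSpace ℝ (Fin n)) : EReal :=
  ⨆ x : EuclideanSpace ℝ (Fin n), ((⟪p, x⟫_ℝ - f x : ℝ) : EReal)

/-- Effective domain `dom f*` of the Legendre–Fenchel conjugate. -/
noncomputable def fconjDom {n : ℕ} (f : EuclideanSpace ℝ (Fin n) → ℝ) :
    Set (EuclideanSpace ℝ (Fin n)) := {p | fconj f p < ⊤}

/-- Dual divergence `D_f(x, p) = f x + f*(p) − ⟨p, x⟩` (meaningful for `p ∈ dom f*`). -/
noncomputable def dualDiv {n : ℕ} (f : EuclideanSpace ℝ (Fin n) → ℝ)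
    (x p : EuclideanSpace ℝ (Fin n)) : ℝ :=
  f x + (fconj f p).toReal - ⟪p, x⟫_ℝ

/-- `f` is `L`-smooth convex: convex, differentiable, with `L`-Lipschitz gradient. -/
def LSmoothConvex {n : ℕ} (L : ℝ) (f : EuclideanSpace ℝ (Fin n) → ℝ) : Prop :=
  ConvexOn ℝ Set.univ f ∧ Differentiable ℝ f ∧
    LipschitzWith (Real.toNNReal L) (fun x => gradient f x)

/-- Gradient inequality for a differentiable convex function. -/
lemma grad_ineq {n : ℕ} {f : EuclideanSpace ℝ (Fin n) → ℝ}
    (hconv : ConvexOn ℝ Set.univ f) (hdiff : Differentiable ℝ f)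
    (x y : EuclideanSpace ℝ (Fin n)) :
    ⟪gradient f x, y - x⟫_ℝ ≤ f y - f x := by
  set A : ℝ →ᵃ[ℝ] EuclideanSpace ℝ (Fin n) := AffineMap.lineMap x y with hA
  have hginv : A ⁻¹' Set.univ = Set.univ := Set.preimage_univ
  have hgc : ConvexOn ℝ Set.univ (f ∘ A) := by
    have := hconv.comp_affineMap A
    rwa [hginv] at this
  -- derivative of f ∘ A at 0
  have hAfun : (fun t : ℝ => A t) = fun t : ℝ => x + t • (y - x) := by
    funext t
    simp [hA, AffineMap.lineMap_apply_module]
    module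
  have hAderiv : HasDerivAt (fun t : ℝ => A t) (y - x) 0 := by
    rw [hAfun]
    have h1 : HasDerivAt (fun t : ℝ => t • (y - x)) ((1 : ℝ) • (y - x)) 0 :=
      (hasDerivAt_id 0).smul_const (y - x)
    simpa using h1.const_add x
  have hfA : HasDerivAt (f ∘ A) ((fderiv ℝ f (A 0)) (y - x)) 0 :=
    (hdiff (A 0)).hasFDerivAt.comp_hasDerivAt 0 hAderiv
  have hA0 : A 0 = x := by simp [hA]
  have hA1 : A 1 = y := by simp [hA]
  have hgradeq : (fderiv ℝ f x) (y - x) = ⟪gradient f x, y - x⟫_ℝ := by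
    have := ((hdiff x).hasGradientAt).hasFDerivAt
    rw [this.fderiv]
    simp
  have hslope := hgc.le_slope_of_hasDerivAt (Set.mem_univ (0 : ℝ)) (Set.mem_univ (1 : ℝ))
    one_pos (by rwa [hA0] at hfA; )
  have : slope (f ∘ A) 0 1 = f y - f x := by
    simp [slope_def_field, hA0, hA1]
  rw [this] at hslope
  rw [← hgradeq]
  exact hslope

/-- The conjugate is bounded below by `-f 0`. -/
lemma fconj_ge {n : ℕ} (f : EuclideanSpace ℝ (Fin n) → ℝ) (p : EuclideanSpace ℝ (Fin n)) :
    ((-f 0 : ℝ) : EReal) ≤ fconj f p := by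
  refine le_iSup_of_le 0 ?_
  simp

/-- The conjugate is lower semicontinuous. -/
lemma fconj_lsc {n : ℕ} (f : EuclideanSpace ℝ (Fin n) → ℝ) :
    LowerSemicontinuous (fconj f) := by
  apply lowerSemicontinuous_iSup
  intro x
  apply Continuous.lowerSemicontinuous
  exact continuous_coe_real_ereal.comp ((continuous_id.inner continuous_const).sub
    continuous_const)

/-- `fconj f (gradient f x₀)` is bounded above by `⟪∇f x₀, x₀⟫ - f x₀`. -/
lemma fconj_grad_le {n : ℕ} {f : EuclideanSpace ℝ (Fin n) → ℝ}
    (hconv : ConvexOn ℝ Set.univ f) (hdiff : Differentiable ℝ f)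
    (x₀ : EuclideanSpace ℝ (Fin n)) :
    fconj f (gradient f x₀) ≤ ((⟪gradient f x₀, x₀⟫_ℝ - f x₀ : ℝ) : EReal) := by
  refine iSup_le fun x => ?_
  rw [EReal.coe_le_coe_iff]
  have h := grad_ineq hconv hdiff x₀ x
  rw [inner_sub_right] at h
  linarith

/-- if `f* ≤ M` on `dom f*`, then `dom f*` is closed (so `p⋆ ∈ dom f*`), and
for every `x₀`, `D_f(x₀, p⋆) ≤ M + f(x₀) + ‖x₀‖ ‖∇f(x₀)‖`. -/
theorem stmt5 {n : ℕ} (hn : 1 ≤ n) (L : ℝ) (hL : 0 < L)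
    (f : EuclideanSpace ℝ (Fin n) → ℝ) (hf : LSmoothConvex L f)
    (M : ℝ) (hM : ∀ p ∈ fconjDom f, fconj f p ≤ (M : EReal))
    (pstar : EuclideanSpace ℝ (Fin n))
    (hps : pstar ∈ closure (fconjDom f))
    (hmin : ∀ q ∈ closure (fconjDom f), ‖pstar‖ ≤ ‖q‖) :
    IsClosed (fconjDom f) ∧ pstar ∈ fconjDom f ∧
      ∀ x₀, dualDiv f x₀ pstar ≤ M + f x₀ + ‖x₀‖ * ‖gradient f x₀‖ := by
  obtain ⟨hconv, hdiff, _⟩ := hf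
  have hdom_eq : fconjDom f = fconj f ⁻¹' Set.Iic (M : EReal) := by
    ext p
    constructor
    · exact fun hp => hM p hp
    · intro hp
      exact lt_of_le_of_lt hp (EReal.coe_lt_top M)
  have hclosed : IsClosed (fconjDom f) := by
    rw [hdom_eq]
    exact lowerSemicontinuous_iff_isClosed_preimage.1 (fconj_lsc f) _
  have hpsdom : pstar ∈ fconjDom f := by
    rwa [hclosed.closure_eq] at hps
  refine ⟨hclosed, hpsdom, fun x₀ => ?_⟩
  -- gradient f x₀ is in the domain
  have hgdom : gradient f x₀ ∈ fconjDom f :=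
    lt_of_le_of_lt (fconj_grad_le hconv hdiff x₀) (EReal.coe_lt_top _)
  have hnorm : ‖pstar‖ ≤ ‖gradient f x₀‖ := hmin _ (subset_closure hgdom)
  have hne_bot : fconj f pstar ≠ ⊥ :=
    (lt_of_lt_of_le (EReal.bot_lt_coe _) (fconj_ge f pstar)).ne'
  have htoReal : (fconj f pstar).toReal ≤ M := by
    have := EReal.toReal_le_toReal (hM pstar hpsdom) hne_bot (EReal.coe_ne_top M)
    simpa using this
  have hinner : -⟪pstar, x₀⟫_ℝ ≤ ‖pstar‖ * ‖x₀‖ := by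
    have := abs_real_inner_le_norm pstar x₀
    have h2 := neg_abs_le ⟪pstar, x₀⟫_ℝ
    linarith
  have hmul : ‖pstar‖ * ‖x₀‖ ≤ ‖x₀‖ * ‖gradient f x₀‖ := by
    rw [mul_comm]
    exact mul_le_mul_of_nonneg_left hnorm (norm_nonneg _)
  unfold dualDiv
  linarith
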